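/- Let a1, a2, a3 be pairwise distinct positive reals with a1 + a2 + a3 = 1/2. Then the positive solutions (x1, x2, x3) of system (S) are exactly the triples of the form ((1-2*a1)*q, (1-2*a2)*q, 2*(a1+a2)*q), ((1-2*a1)*q, (1-2*a2)*q, 2*(1-a1-a2)*q), ((1-2*a1)*q, (1+2*a2)*q, 2*(a1+a2)*q), or ((1+2*a1)*q, (1-2*a2)*q, 2*(a1+a2)*q) with q > 0. -/

import Mathlib

noncomputable section
open Real Set

/-- First equation of system (S). -/
def eqS1 (a1 a2 a3 x1 x2 x3 : ℝ) : Prop :=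
  (a2 + a3)*(a1*x2^2 + a1*x3^2 - x2*x3) + (a2*x2 + a3*x3)*x1
    - (a1*a2 + a1*a3 + 2*a2*a3)*x1^2 = 0

/-- Second equation of system (S). -/
def eqS2 (a1 a2 a3 x1 x2 x3 : ℝ) : Prop :=
  (a1 + a3)*(a2*x1^2 + a2*x3^2 - x1*x3) + (a1*x1 + a3*x3)*x2
    - (a1*a2 + 2*a1*a3 + a2*a3)*x2^2 = 0

set_option maxHeartbeats 2000000 in
theorem sum_half_distinct_solutions (a1 a2 a3 : ℝ)
    (h1 : 0 < a1) (h2 : 0 < a2) (h3 : 0 < a3)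
    (h12 : a1 ≠ a2) (h13 : a1 ≠ a3) (h23 : a2 ≠ a3)
    (hsum : a1 + a2 + a3 = 1/2)
    (x1 x2 x3 : ℝ) (hx1 : 0 < x1) (hx2 : 0 < x2) (hx3 : 0 < x3) :
    (eqS1 a1 a2 a3 x1 x2 x3 ∧ eqS2 a1 a2 a3 x1 x2 x3) ↔
      ∃ q : ℝ, 0 < q ∧
        ((x1 = (1 - 2*a1)*q ∧ x2 = (1 - 2*a2)*q ∧ x3 = 2*(a1 + a2)*q) ∨
         (x1 = (1 - 2*a1)*q ∧ x2 = (1 - 2*a2)*q ∧ x3 = 2*(1 - a1 - a2)*q) ∨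
         (x1 = (1 - 2*a1)*q ∧ x2 = (1 + 2*a2)*q ∧ x3 = 2*(a1 + a2)*q) ∨
         (x1 = (1 + 2*a1)*q ∧ x2 = (1 - 2*a2)*q ∧ x3 = 2*(a1 + a2)*q)) := by
  have ha3 : a3 = 1/2 - a1 - a2 := by linarith
  subst ha3
  have hs : (0:ℝ) < a1 + a2 := by linarith
  have hs2 : (2*(a1+a2)) ≠ 0 := ne_of_gt (by linarith)
  have hσ : (0:ℝ) < a1*a2 + a1*(1/2-a1-a2) + a2*(1/2-a1-a2) := by
    nlinarith [mul_pos h1 h2, mul_pos h1 h3, mul_pos h2 h3]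
  constructor
  · rintro ⟨h1e, h2e⟩
    unfold eqS1 at h1e
    unfold eqS2 at h2e
    have key : x1 * ((a1*a2 + a1*(1/2-a1-a2) + a2*(1/2-a1-a2))^2 *
        ((2*(a1+a2)*x2 - (1-2*a2)*x3)^2 *
         ((2*(a1+a2)*x2 - (1+2*a2)*x3) * ((2-2*(a1+a2))*x2 - (1-2*a2)*x3)))) = 0 := by
      linear_combination ((1/2:ℝ)*a2*x2*x3^2 + (1/2:ℝ)*a2^2*x3^3 + (-3:ℝ)*a2^2*x2*x3^2 + (-3/2:ℝ)*a2^2*x2^2*x3 + (-1/2:ℝ)*a2^2*x1*x2*x3 + (-3:ℝ)*a2^3*x3^3 + (5:ℝ)*a2^3*x2*x3^2 + (7:ℝ)*a2^3*x2^2*x3 + (1:ℝ)*a2^3*x2^3 + (-1:ℝ)*a2^3*x1*x3^2 + (4:ℝ)*a2^3*x1*x2*x3 + (1:ℝ)*a2^3*x1*x2^2 + (6:ℝ)*a2^4*x3^3 + (-10:ℝ)*a2^4*x2^2*x3 + (-4:ℝ)*a2^4*x2^3 + (6:ℝ)*a2^4*x1*x3^2 + (-10:ℝ)*a2^4*x1*x2*x3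 + (-6:ℝ)*a2^4*x1*x2^2 + (-4:ℝ)*a2^5*x3^3 + (-4:ℝ)*a2^5*x2*x3^2 + (4:ℝ)*a2^5*x2^2*x3 + (4:ℝ)*a2^5*x2^3 + (-12:ℝ)*a2^5*x1*x3^2 + (8:ℝ)*a2^5*x1*x2*x3 + (12:ℝ)*a2^5*x1*x2^2 + (8:ℝ)*a2^6*x1*x3^2 + (-8:ℝ)*a2^6*x1*x2^2 + (1/2:ℝ)*a1*x2*x3^2 + (1/2:ℝ)*a1*a2*x3^3 + (-4:ℝ)*a1*a2*x2*x3^2 + (-7/2:ℝ)*a1*a2*x2^2*x3 + (-1/2:ℝ)*a1*a2*x1*x2*x3 + (-3:ℝ)*a1*a2^2*x3^3 + (8:ℝ)*a1*a2^2*x2*x3^2 + (19:ℝ)*a1*a2^2*x2^2*x3 + (4:ℝ)*a1*a2^2*x2^3 + (-1:ℝ)*a1*a2^2*x1*x3^2 + (5:ℝ)*a1*a2^2*x1*x2*x3 + (2:ℝ)*a1*a2^2*x1*x2^2 + (6:ℝ)*a1*a2^3*x3^3 + (-30:ℝ)*a1*a2^3*x2^2*x3 + (-16:ℝ)*a1*a2^3*x2^3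 + (6:ℝ)*a1*a2^3*x1*x3^2 + (-14:ℝ)*a1*a2^3*x1*x2*x3 + (-14:ℝ)*a1*a2^3*x1*x2^2 + (-4:ℝ)*a1*a2^4*x3^3 + (-8:ℝ)*a1*a2^4*x2*x3^2 + (12:ℝ)*a1*a2^4*x2^2*x3 + (16:ℝ)*a1*a2^4*x2^3 + (-12:ℝ)*a1*a2^4*x1*x3^2 + (12:ℝ)*a1*a2^4*x1*x2*x3 + (32:ℝ)*a1*a2^4*x1*x2^2 + (8:ℝ)*a1*a2^5*x1*x3^2 + (-24:ℝ)*a1*a2^5*x1*x2^2 + (-2:ℝ)*a1^2*x2*x3^2 + (-2:ℝ)*a1^2*x2^2*x3 + (-1:ℝ)*a1^2*a2*x3^3 + (7:ℝ)*a1^2*a2*x2*x3^2 + (19:ℝ)*a1^2*a2*x2^2*x3 + (5:ℝ)*a1^2*a2*x2^3 + (2:ℝ)*a1^2*a2*x1*x2*x3 + (1:ℝ)*a1^2*a2*x1*x2^2 + (4:ℝ)*a1^2*a2^2*x3^3 + (-2:ℝ)*a1^2*a2^2*x2*x3^2 + (-40:ℝ)*a1^2*a2^2*x2^2*x3 + (-26:ℝ)*a1^2*a2^2*x2^3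 + (2:ℝ)*a1^2*a2^2*x1*x3^2 + (-10:ℝ)*a1^2*a2^2*x1*x2*x3 + (-12:ℝ)*a1^2*a2^2*x1*x2^2 + (-4:ℝ)*a1^2*a2^3*x3^3 + (-8:ℝ)*a1^2*a2^3*x2*x3^2 + (20:ℝ)*a1^2*a2^3*x2^2*x3 + (32:ℝ)*a1^2*a2^3*x2^3 + (-8:ℝ)*a1^2*a2^3*x1*x3^2 + (12:ℝ)*a1^2*a2^3*x1*x2*x3 + (36:ℝ)*a1^2*a2^3*x1*x2^2 + (8:ℝ)*a1^2*a2^4*x1*x3^2 + (-32:ℝ)*a1^2*a2^4*x1*x2^2 + (2:ℝ)*a1^3*x2*x3^2 + (8:ℝ)*a1^3*x2^2*x3 + (2:ℝ)*a1^3*x2^3 + (-2:ℝ)*a1^3*a2*x2*x3^2 + (-28:ℝ)*a1^3*a2*x2^2*x3 + (-22:ℝ)*a1^3*a2*x2^3 + (-2:ℝ)*a1^3*a2*x1*x2*x3 + (-4:ℝ)*a1^3*a2*x1*x2^2 + (-4:ℝ)*a1^3*a2^2*x2*x3^2 + (16:ℝ)*a1^3*a2^2*x2^2*x3 + (36:ℝ)*a1^3*a2^2*x2^3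 + (4:ℝ)*a1^3*a2^2*x1*x2*x3 + (20:ℝ)*a1^3*a2^2*x1*x2^2 + (-24:ℝ)*a1^3*a2^3*x1*x2^2 + (-8:ℝ)*a1^4*x2^2*x3 + (-8:ℝ)*a1^4*x2^3 + (8:ℝ)*a1^4*a2*x2^2*x3 + (24:ℝ)*a1^4*a2*x2^3 + (4:ℝ)*a1^4*a2*x1*x2^2 + (-8:ℝ)*a1^4*a2^2*x1*x2^2 + (8:ℝ)*a1^5*x2^3) * h1e + ((1/2:ℝ)*a2*x2*x3^2 + (-2:ℝ)*a2^2*x2*x3^2 + (-1:ℝ)*a2^2*x2^2*x3 + (-1:ℝ)*a2^2*x1*x2*x3 + (2:ℝ)*a2^3*x2*x3^2 + (2:ℝ)*a2^3*x2^2*x3 + (-2:ℝ)*a2^3*x1*x3^2 + (8:ℝ)*a2^3*x1*x2*x3 + (2:ℝ)*a2^3*x1*x2^2 + (12:ℝ)*a2^4*x1*x3^2 + (-20:ℝ)*a2^4*x1*x2*x3 + (-12:ℝ)*a2^4*x1*x2^2 + (-24:ℝ)*a2^5*x1*x3^2 + (16:ℝ)*a2^5*x1*x2*x3 + (24:ℝ)*a2^5*x1*x2^2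 + (16:ℝ)*a2^6*x1*x3^2 + (-16:ℝ)*a2^6*x1*x2^2 + (1/2:ℝ)*a1*x2*x3^2 + (-1/2:ℝ)*a1*a2*x3^3 + (-3:ℝ)*a1*a2*x2*x3^2 + (-5/2:ℝ)*a1*a2*x2^2*x3 + (-3/2:ℝ)*a1*a2*x1*x2*x3 + (2:ℝ)*a1*a2^2*x3^3 + (7:ℝ)*a1*a2^2*x2*x3^2 + (8:ℝ)*a1*a2^2*x2^2*x3 + (1:ℝ)*a1*a2^2*x2^3 + (-3:ℝ)*a1*a2^2*x1*x3^2 + (15:ℝ)*a1*a2^2*x1*x2*x3 + (5:ℝ)*a1*a2^2*x1*x2^2 + (-2:ℝ)*a1*a2^3*x3^3 + (-6:ℝ)*a1*a2^3*x2*x3^2 + (-6:ℝ)*a1*a2^3*x2^2*x3 + (-2:ℝ)*a1*a2^3*x2^3 + (20:ℝ)*a1*a2^3*x1*x3^2 + (-44:ℝ)*a1*a2^3*x1*x2*x3 + (-36:ℝ)*a1*a2^3*x1*x2^2 + (-44:ℝ)*a1*a2^4*x1*x3^2 + (40:ℝ)*a1*a2^4*x1*x2*x3 + (84:ℝ)*a1*a2^4*x1*x2^2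 + (32:ℝ)*a1*a2^5*x1*x3^2 + (-64:ℝ)*a1*a2^5*x1*x2^2 + (-1/2:ℝ)*a1^2*x3^3 + (-2:ℝ)*a1^2*x2*x3^2 + (-3/2:ℝ)*a1^2*x2^2*x3 + (-1/2:ℝ)*a1^2*x1*x2*x3 + (3:ℝ)*a1^2*a2*x3^3 + (8:ℝ)*a1^2*a2*x2*x3^2 + (11:ℝ)*a1^2*a2*x2^2*x3 + (2:ℝ)*a1^2*a2*x2^3 + (-1:ℝ)*a1^2*a2*x1*x3^2 + (11:ℝ)*a1^2*a2*x1*x2*x3 + (4:ℝ)*a1^2*a2*x1*x2^2 + (-6:ℝ)*a1^2*a2^2*x3^3 + (-10:ℝ)*a1^2*a2^2*x2*x3^2 + (-14:ℝ)*a1^2*a2^2*x2^2*x3 + (-6:ℝ)*a1^2*a2^2*x2^3 + (14:ℝ)*a1^2*a2^2*x1*x3^2 + (-48:ℝ)*a1^2*a2^2*x1*x2*x3 + (-44:ℝ)*a1^2*a2^2*x1*x2^2 + (4:ℝ)*a1^2*a2^3*x3^3 + (4:ℝ)*a1^2*a2^3*x2*x3^2 + (4:ℝ)*a1^2*a2^3*x2^2*x3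 + (4:ℝ)*a1^2*a2^3*x2^3 + (-44:ℝ)*a1^2*a2^3*x1*x3^2 + (56:ℝ)*a1^2*a2^3*x1*x2*x3 + (132:ℝ)*a1^2*a2^3*x1*x2^2 + (40:ℝ)*a1^2*a2^4*x1*x3^2 + (-120:ℝ)*a1^2*a2^4*x1*x2^2 + (2:ℝ)*a1^3*x3^3 + (3:ℝ)*a1^3*x2*x3^2 + (6:ℝ)*a1^3*x2^2*x3 + (1:ℝ)*a1^3*x2^3 + (3:ℝ)*a1^3*x1*x2*x3 + (1:ℝ)*a1^3*x1*x2^2 + (-6:ℝ)*a1^3*a2*x3^3 + (-12:ℝ)*a1^3*a2*x2*x3^2 + (-14:ℝ)*a1^3*a2*x2^2*x3 + (-8:ℝ)*a1^3*a2*x2^3 + (4:ℝ)*a1^3*a2*x1*x3^2 + (-26:ℝ)*a1^3*a2*x1*x2*x3 + (-26:ℝ)*a1^3*a2*x1*x2^2 + (4:ℝ)*a1^3*a2^2*x3^3 + (8:ℝ)*a1^3*a2^2*x2*x3^2 + (4:ℝ)*a1^3*a2^2*x2^2*x3 + (8:ℝ)*a1^3*a2^2*x2^3 + (-20:ℝ)*a1^3*a2^2*x1*x3^2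 + (44:ℝ)*a1^3*a2^2*x1*x2*x3 + (116:ℝ)*a1^3*a2^2*x1*x2^2 + (24:ℝ)*a1^3*a2^3*x1*x3^2 + (-136:ℝ)*a1^3*a2^3*x1*x2^2 + (-2:ℝ)*a1^4*x3^3 + (-4:ℝ)*a1^4*x2*x3^2 + (-6:ℝ)*a1^4*x2^2*x3 + (-4:ℝ)*a1^4*x2^3 + (-6:ℝ)*a1^4*x1*x2*x3 + (-6:ℝ)*a1^4*x1*x2^2 + (4:ℝ)*a1^4*a2*x3^3 + (8:ℝ)*a1^4*a2*x2*x3^2 + (4:ℝ)*a1^4*a2*x2^2*x3 + (8:ℝ)*a1^4*a2*x2^3 + (-4:ℝ)*a1^4*a2*x1*x3^2 + (20:ℝ)*a1^4*a2*x1*x2*x3 + (56:ℝ)*a1^4*a2*x1*x2^2 + (8:ℝ)*a1^4*a2^2*x1*x3^2 + (-96:ℝ)*a1^4*a2^2*x1*x2^2 + (4:ℝ)*a1^5*x2*x3^2 + (4:ℝ)*a1^5*x2^3 + (4:ℝ)*a1^5*x1*x2*x3 + (12:ℝ)*a1^5*x1*x2^2 + (-40:ℝ)*a1^5*a2*x1*x2^2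 + (-8:ℝ)*a1^6*x1*x2^2) * h2e
    have hprod : (2*(a1+a2)*x2 - (1-2*a2)*x3)^2 *
        ((2*(a1+a2)*x2 - (1+2*a2)*x3) * ((2-2*(a1+a2))*x2 - (1-2*a2)*x3)) = 0 := by
      rcases mul_eq_zero.mp key with h | h
      · exact absurd h hx1.ne'
      rcases mul_eq_zero.mp h with h' | h'
      · exact absurd h' (pow_ne_zero 2 hσ.ne')
      · exact h'
    rcases mul_eq_zero.mp hprod with hL | hrest
    · -- Case L1 = 0
      have hL1 : 2*(a1+a2)*x2 - (1-2*a2)*x3 = 0 := by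
        exact pow_eq_zero_iff (two_ne_zero (α := ℕ)) |>.mp hL
      have hD : (0:ℝ) < a1*a2 + a1*(1/2-a1-a2) + 2*(a2*(1/2-a1-a2)) := by
        nlinarith [mul_pos h1 h2, mul_pos h1 h3, mul_pos h2 h3]
      have h16 : (16*(a1+a2)^4*(a1*a2 + a1*(1/2-a1-a2) + 2*(a2*(1/2-a1-a2)))) *
          ((2*(a1+a2)*x1 - (1-2*a1)*x3) * (2*(a1+a2)*x1 - (1+2*a1)*x3)) = 0 := by
        linear_combination ((-64:ℝ)*a2^6 + (-384:ℝ)*a1*a2^5 + (-960:ℝ)*a1^2*a2^4 + (-1280:ℝ)*a1^3*a2^3 + (-960:ℝ)*a1^4*a2^2 + (-384:ℝ)*a1^5*a2 + (-64:ℝ)*a1^6) * h1e + ((-16:ℝ)*a2^5*x3 + (32:ℝ)*a2^6*x1 + (-72:ℝ)*a1*a2^4*x3 + (16:ℝ)*a1*a2^5*x3 + (16:ℝ)*a1*a2^5*x2 + (160:ℝ)*a1*a2^5*x1 + (-128:ℝ)*a1^2*a2^3*x3 + (80:ℝ)*a1^2*a2^4*x3 + (80:ℝ)*a1^2*a2^4*x2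 + (320:ℝ)*a1^2*a2^4*x1 + (32:ℝ)*a1^2*a2^5*x3 + (-32:ℝ)*a1^2*a2^5*x2 + (-112:ℝ)*a1^3*a2^2*x3 + (160:ℝ)*a1^3*a2^3*x3 + (160:ℝ)*a1^3*a2^3*x2 + (320:ℝ)*a1^3*a2^3*x1 + (128:ℝ)*a1^3*a2^4*x3 + (-160:ℝ)*a1^3*a2^4*x2 + (-48:ℝ)*a1^4*a2*x3 + (160:ℝ)*a1^4*a2^2*x3 + (160:ℝ)*a1^4*a2^2*x2 + (160:ℝ)*a1^4*a2^2*x1 + (192:ℝ)*a1^4*a2^3*x3 + (-320:ℝ)*a1^4*a2^3*x2 + (-8:ℝ)*a1^5*x3 + (80:ℝ)*a1^5*a2*x3 + (80:ℝ)*a1^5*a2*x2 + (32:ℝ)*a1^5*a2*x1 + (128:ℝ)*a1^5*a2^2*x3 + (-320:ℝ)*a1^5*a2^2*x2 + (16:ℝ)*a1^6*x3 + (16:ℝ)*a1^6*x2 + (32:ℝ)*a1^6*a2*x3 + (-160:ℝ)*a1^6*a2*x2 + (-32:ℝ)*a1^7*x2) * hL1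
      have hG : (2*(a1+a2)*x1 - (1-2*a1)*x3) * (2*(a1+a2)*x1 - (1+2*a1)*x3) = 0 := by
        rcases mul_eq_zero.mp h16 with h' | h'
        · exact absurd h' (ne_of_gt (mul_pos (mul_pos (by norm_num) (pow_pos hs 4)) hD))
        · exact h'
      refine ⟨x3/(2*(a1+a2)), div_pos hx3 (by linarith), ?_⟩
      rcases mul_eq_zero.mp hG with hG1 | hG2
      · refine Or.inl ⟨?_, ?_, ?_⟩
        · field_simp
          linarith
        · field_simp
          linarith
        · field_simp
      · refine Or.inr (Or.inr (Or.inr ⟨?_, ?_, ?_⟩))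
        · field_simp
          linarith
        · field_simp
          linarith
        · field_simp
    rcases mul_eq_zero.mp hrest with hL2 | hL3
    · -- Case L2 = 0
      have hlin : (4*a2*(a1+a2)*(a1*a2 + a1*(1/2-a1-a2) + a2*(1/2-a1-a2))) *
          (x3 * (2*(a1+a2)*x1 - (1-2*a1)*x3)) = 0 := by
        linear_combination ((2:ℝ)*a2^3 + (-4:ℝ)*a2^4 + (4:ℝ)*a1*a2^2 + (-8:ℝ)*a1*a2^3 + (2:ℝ)*a1^2*a2 + (-4:ℝ)*a1^2*a2^2) * h1e + ((4:ℝ)*a2^3 + (-8:ℝ)*a2^4 + (10:ℝ)*a1*a2^2 + (-24:ℝ)*a1*a2^3 + (8:ℝ)*a1^2*a2 + (-28:ℝ)*a1^2*a2^2 + (2:ℝ)*a1^3 + (-16:ℝ)*a1^3*a2 + (-4:ℝ)*a1^4) * h2e + ((2:ℝ)*a2^3*x3 + (1:ℝ)*a2^3*x2 + (-1:ℝ)*a2^3*x1 + (-6:ℝ)*a2^4*x3 + (-4:ℝ)*a2^4*x2 + (2:ℝ)*a2^4*x1 + (4:ℝ)*a2^5*x3 + (4:ℝ)*a2^5*x2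 + (4:ℝ)*a1*a2^2*x3 + (3:ℝ)*a1*a2^2*x2 + (-3:ℝ)*a1*a2^2*x1 + (-14:ℝ)*a1*a2^3*x3 + (-14:ℝ)*a1*a2^3*x2 + (6:ℝ)*a1*a2^3*x1 + (12:ℝ)*a1*a2^4*x3 + (16:ℝ)*a1*a2^4*x2 + (2:ℝ)*a1^2*a2*x3 + (3:ℝ)*a1^2*a2*x2 + (-3:ℝ)*a1^2*a2*x1 + (-14:ℝ)*a1^2*a2^2*x3 + (-20:ℝ)*a1^2*a2^2*x2 + (8:ℝ)*a1^2*a2^2*x1 + (16:ℝ)*a1^2*a2^3*x3 + (28:ℝ)*a1^2*a2^3*x2 + (1:ℝ)*a1^3*x2 + (-1:ℝ)*a1^3*x1 + (-6:ℝ)*a1^3*a2*x3 + (-14:ℝ)*a1^3*a2*x2 + (6:ℝ)*a1^3*a2*x1 + (12:ℝ)*a1^3*a2^2*x3 + (28:ℝ)*a1^3*a2^2*x2 + (-4:ℝ)*a1^4*x2 + (2:ℝ)*a1^4*x1 + (4:ℝ)*a1^4*a2*x3 + (16:ℝ)*a1^4*a2*x2 + (4:ℝ)*a1^5*x2) * 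hL2
      have hG1 : 2*(a1+a2)*x1 - (1-2*a1)*x3 = 0 := by
        rcases mul_eq_zero.mp hlin with h' | h'
        · exact absurd h' (ne_of_gt (mul_pos (mul_pos (mul_pos (by norm_num) h2) hs) hσ))
        rcases mul_eq_zero.mp h' with h'' | h''
        · exact absurd h'' hx3.ne'
        · exact h''
      refine ⟨x3/(2*(a1+a2)), div_pos hx3 (by linarith), Or.inr (Or.inr (Or.inl ⟨?_, ?_, ?_⟩))⟩
      · field_simp
        linarith
      · field_simp
        linarith
      · field_simp
    · -- Case L3 = 0
      have hc3 : (0:ℝ) < 2 - 2*(a1+a2) := by linarith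
      have hc3' : (2 - 2*(a1+a2)) ≠ 0 := hc3.ne'
      have h2a2 : (0:ℝ) < 1 - 2*a2 := by linarith
      have hlin : (2*((1/2-a1-a2)*((1-2*a2)*(a1*a2 + a1*(1/2-a1-a2) + a2*(1/2-a1-a2))))) *
          (x3 * ((2-2*(a1+a2))*x1 - (1-2*a1)*x3)) = 0 := by
        linear_combination ((-2:ℝ)*a2 + (8:ℝ)*a2^2 + (-10:ℝ)*a2^3 + (4:ℝ)*a2^4 + (4:ℝ)*a1*a2 + (-12:ℝ)*a1*a2^2 + (8:ℝ)*a1*a2^3 + (-2:ℝ)*a1^2*a2 + (4:ℝ)*a1^2*a2^2) * h1e + ((-4:ℝ)*a2 + (16:ℝ)*a2^2 + (-20:ℝ)*a2^3 + (8:ℝ)*a2^4 + (-2:ℝ)*a1 + (20:ℝ)*a1*a2 + (-42:ℝ)*a1*a2^2 + (24:ℝ)*a1*a2^3 + (8:ℝ)*a1^2 + (-32:ℝ)*a1^2*a2 + (28:ℝ)*a1^2*a2^2 + (-10:ℝ)*a1^3 + (16:ℝ)*a1^3*a2 + (4:ℝ)*a1^4) * h2e + ((1/2:ℝ)*a2*x3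 + (-4:ℝ)*a2^2*x3 + (-1:ℝ)*a2^2*x2 + (1:ℝ)*a2^2*x1 + (10:ℝ)*a2^3*x3 + (5:ℝ)*a2^3*x2 + (-3:ℝ)*a2^3*x1 + (-10:ℝ)*a2^4*x3 + (-8:ℝ)*a2^4*x2 + (2:ℝ)*a2^4*x1 + (4:ℝ)*a2^5*x3 + (4:ℝ)*a2^5*x2 + (1/2:ℝ)*a1*x3 + (-6:ℝ)*a1*a2*x3 + (-2:ℝ)*a1*a2*x2 + (2:ℝ)*a1*a2*x1 + (20:ℝ)*a1*a2^2*x3 + (13:ℝ)*a1*a2^2*x2 + (-7:ℝ)*a1*a2^2*x1 + (-26:ℝ)*a1*a2^3*x3 + (-26:ℝ)*a1*a2^3*x2 + (6:ℝ)*a1*a2^3*x1 + (12:ℝ)*a1*a2^4*x3 + (16:ℝ)*a1*a2^4*x2 + (-3:ℝ)*a1^2*x3 + (-1:ℝ)*a1^2*x2 + (1:ℝ)*a1^2*x1 + (18:ℝ)*a1^2*a2*x3 + (13:ℝ)*a1^2*a2*x2 + (-7:ℝ)*a1^2*a2*x1 + (-30:ℝ)*a1^2*a2^2*x3 + (-36:ℝ)*a1^2*a2^2*x2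 + (8:ℝ)*a1^2*a2^2*x1 + (16:ℝ)*a1^2*a2^3*x3 + (28:ℝ)*a1^2*a2^3*x2 + (6:ℝ)*a1^3*x3 + (5:ℝ)*a1^3*x2 + (-3:ℝ)*a1^3*x1 + (-18:ℝ)*a1^3*a2*x3 + (-26:ℝ)*a1^3*a2*x2 + (6:ℝ)*a1^3*a2*x1 + (12:ℝ)*a1^3*a2^2*x3 + (28:ℝ)*a1^3*a2^2*x2 + (-4:ℝ)*a1^4*x3 + (-8:ℝ)*a1^4*x2 + (2:ℝ)*a1^4*x1 + (4:ℝ)*a1^4*a2*x3 + (16:ℝ)*a1^4*a2*x2 + (4:ℝ)*a1^5*x2) * hL3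
      have hG : (2-2*(a1+a2))*x1 - (1-2*a1)*x3 = 0 := by
        rcases mul_eq_zero.mp hlin with h' | h'
        · exact absurd h' (ne_of_gt (mul_pos two_pos (mul_pos h3 (mul_pos h2a2 hσ))))
        rcases mul_eq_zero.mp h' with h'' | h''
        · exact absurd h'' hx3.ne'
        · exact h''
      refine ⟨x3/(2-2*(a1+a2)), div_pos hx3 hc3, Or.inr (Or.inl ⟨?_, ?_, ?_⟩)⟩
      · rw [mul_div_assoc', eq_div_iff hc3']
        linear_combination hG
      · rw [mul_div_assoc', eq_div_iff hc3']
        linear_combination hL3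
      · rw [mul_div_assoc', eq_div_iff hc3']
        ring
  · rintro ⟨q, hq, (⟨e1, e2, e3⟩ | ⟨e1, e2, e3⟩ | ⟨e1, e2, e3⟩ | ⟨e1, e2, e3⟩)⟩ <;>
      subst e1 <;> subst e2 <;> subst e3 <;>
      exact ⟨by unfold eqS1; ring, by unfold eqS2; ring⟩
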